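/- Let X be a type and l a filter on X. Let S be the set of functions f : X → ℝ that are eventually nonzero along l and tend to 0 along l. Define a relation on S by f ≈ g if and only if the function (f − g)/g² tends to 0 along l. Then ≈ is an equivalence relation on S: it is reflexive, symmetric, and transitive. -/

import Mathlib

open Filter Topology

private lemma gauge_aux_ratio {X : Type*} {l : Filter X} {f g : X → ℝ}
    (hg0 : ∀ᶠ x in l, g x ≠ 0)
    (hr : Tendsto (fun x => (f x - g x) / (g x) ^ 2) l (𝓝 0))
    (hg : Tendsto g l (𝓝 0)) :
    Tendsto (fun x => f x / g x) l (𝓝 1) := by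
  have h2 : Tendsto (fun x => (f x - g x) / (g x) ^ 2 * g x + 1) l (𝓝 1) := by
    have := (hr.mul hg).add_const 1
    simpa using this
  refine h2.congr' ?_
  filter_upwards [hg0] with x hx
  field_simp
  ring

/-- The gauge-equivalence relation between completion functions (modeled as
functions `X → ℝ` that are eventually nonzero and tend to `0` along a filter `l`):
`f ≈ g` iff `(f - g)/g²` tends to `0` along `l`. This relation is reflexive,
symmetric and transitive on that set. -/
theorem gauge_equivalence_is_equivalence {X : Type*} (l : Filter X) :
    let S : Set (X → ℝ) :=
      {f | (∀ᶠ x in l, f x ≠ 0) ∧ Tendsto f l (𝓝 0)}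
    let r : (X → ℝ) → (X → ℝ) → Prop := fun f g =>
      Tendsto (fun x => (f x - g x) / (g x) ^ 2) l (𝓝 0)
    (∀ f ∈ S, r f f) ∧
      (∀ f ∈ S, ∀ g ∈ S, r f g → r g f) ∧
      (∀ f ∈ S, ∀ g ∈ S, ∀ h ∈ S, r f g → r g h → r f h) := by
  intro S r
  refine ⟨?_, ?_, ?_⟩
  · intro f hf
    have : Tendsto (fun _ : X => (0 : ℝ)) l (𝓝 0) := tendsto_const_nhds
    refine this.congr' ?_
    filter_upwards [hf.1] with x hx
    simp
  · rintro f ⟨hf0, hf⟩ g ⟨hg0, hg⟩ hr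
    have hfg : Tendsto (fun x => f x / g x) l (𝓝 1) := gauge_aux_ratio hg0 hr hg
    have hgf : Tendsto (fun x => g x / f x) l (𝓝 1) := by
      have := hfg.inv₀ one_ne_zero
      simpa using this
    have key : Tendsto (fun x => -((f x - g x) / (g x) ^ 2) * (g x / f x) ^ 2) l
        (𝓝 0) := by
      have := hr.neg.mul (hgf.pow 2)
      simpa using this
    refine key.congr' ?_
    filter_upwards [hf0, hg0] with x hx hx'
    field_simp
    ring
  · rintro f ⟨hf0, hf⟩ g ⟨hg0, hg⟩ h ⟨hh0, hh⟩ hfg hgh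
    have hgh1 : Tendsto (fun x => g x / h x) l (𝓝 1) := gauge_aux_ratio hh0 hgh hh
    have key : Tendsto
        (fun x => (f x - g x) / (g x) ^ 2 * (g x / h x) ^ 2 +
          (g x - h x) / (h x) ^ 2) l (𝓝 0) := by
      have := (hfg.mul (hgh1.pow 2)).add hgh
      simpa using this
    refine key.congr' ?_
    filter_upwards [hg0, hh0] with x hx hx'
    field_simp
    ring
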